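/- Suppose (X,J) is a perfect quasimetric space in which, for all sufficiently large N, the geodesic problem over Path_N(x,y) has a minimizer for each pair x,y. Then (X,D_J) is a length space: for every x,y ∈ X with L = D_J(x,y), there exists f: [0,L] → X with f(0)=x, f(L)=y, and D_J(f(t),f(s)) = |t−s| for all t,s ∈ [0,L]. -/

import Mathlib

open Filter Topology
open scoped ENNReal

variable {X : Type*}

/-- The length (in `[0,∞]`) of `f` on `[u,v]`, computed as the supremum of
variations `∑ J (f (t i)) (f (t (i+1)))` over all monotone chains
`u = t 0 ≤ t 1 ≤ ⋯ ≤ t n = v`. -/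
noncomputable def pieceLen (J : X → X → ℝ) (f : ℝ → X) (u v : ℝ) : ℝ≥0∞ :=
  ⨆ (n : ℕ) (t : ℕ → ℝ) (_ : Monotone t ∧ t 0 = u ∧ t n = v),
    ∑ i ∈ Finset.range n, ENNReal.ofReal (J (f (t i)) (f (t (i + 1))))

/-- On the piece `[u,v]`, `J` is a metric on the image `f([u,v])` (i.e. the
genuine triangle inequality holds there) and `f` is Lipschitz. -/
def IsPiece (J : X → X → ℝ) (f : ℝ → X) (u v : ℝ) : Prop :=
  (∀ s ∈ Set.Icc u v, ∀ t ∈ Set.Icc u v, ∀ r ∈ Set.Icc u v,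
      J (f s) (f r) ≤ J (f s) (f t) + J (f t) (f r)) ∧
  (∃ C : ℝ, ∀ s ∈ Set.Icc u v, ∀ t ∈ Set.Icc u v, J (f s) (f t) ≤ C * |s - t|)

/-- `f : [a,b] → (X,J)` is an `N`-piecewise metric Lipschitz curve with
partition `P`: `a = P 0 < P 1 < ⋯ < P N = b`, and on each `[P i, P (i+1)]`
the function `J` is a metric on the image and `f` is Lipschitz. -/
def IsPML (J : X → X → ℝ) (N : ℕ) (a b : ℝ) (f : ℝ → X) (P : ℕ → ℝ) : Prop :=
  P 0 = a ∧ P N = b ∧ (∀ i < N, P i < P (i + 1)) ∧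
  ∀ i < N, IsPiece J f (P i) (P (i + 1))

/-- The length of an `N`-piecewise metric Lipschitz curve: the sum of the
lengths of its pieces. -/
noncomputable def pmlLength (J : X → X → ℝ) (N : ℕ) (f : ℝ → X) (P : ℕ → ℝ) : ℝ≥0∞ :=
  ∑ i ∈ Finset.range N, pieceLen J f (P i) (P (i + 1))

/-- `D_J^{(N)}(x,y)`: the infimal length of `N`-piecewise metric Lipschitz
curves on `[0,1]` from `x` to `y` (`∞` if there are none). -/
noncomputable def DJN (J : X → X → ℝ) (N : ℕ) (x y : X) : ℝ≥0∞ :=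
  ⨅ (f : ℝ → X) (P : ℕ → ℝ) (_ : IsPML J N 0 1 f P ∧ f 0 = x ∧ f 1 = y),
    pmlLength J N f P

/-- `D_J(x,y) = lim_{N→∞} D_J^{(N)}(x,y)`; since `D_J^{(N)}` is nonincreasing
in `N`, this limit is the infimum over `N`. -/
noncomputable def DJ (J : X → X → ℝ) (x y : X) : ℝ≥0∞ :=
  ⨅ N : ℕ, DJN J N x y

namespace QM15


variable {J : X → X → ℝ} {f g : ℝ → X} {u v w : ℝ}

def Chain (u v : ℝ) : Type := {p : ℕ × (ℕ → ℝ) // Monotone p.2 ∧ p.2 0 = u ∧ p.2 p.1 = v}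

noncomputable def chainSum (J : X → X → ℝ) (f : ℝ → X) {u v : ℝ} (c : Chain u v) : ℝ≥0∞ :=
  ∑ i ∈ Finset.range c.1.1, ENNReal.ofReal (J (f (c.1.2 i)) (f (c.1.2 (i + 1))))

lemma chain_nonempty (h : u ≤ v) : Nonempty (Chain u v) := by
  refine ⟨⟨(1, fun i => if i = 0 then u else v), ?_, by simp, by simp⟩⟩
  intro a b hab
  by_cases ha : a = 0
  · subst ha
    by_cases hb : b = 0 <;> simp [hb, h]
  · have hb : b ≠ 0 := by omega
    simp [ha, hb]

lemma pieceLen_eq_chain (J : X → X → ℝ) (f : ℝ → X) (u v : ℝ) :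
    pieceLen J f u v = ⨆ c : Chain u v, chainSum J f c := by
  apply le_antisymm
  · refine iSup_le fun n => iSup_le fun t => iSup_le fun ht => ?_
    exact le_iSup_of_le (⟨(n, t), ht⟩ : Chain u v) le_rfl
  · refine iSup_le fun c => ?_
    exact le_iSup_of_le c.1.1 (le_iSup_of_le c.1.2 (le_iSup_of_le c.2 le_rfl))

lemma le_pieceLen (J : X → X → ℝ) (f : ℝ → X) {u v : ℝ} (n : ℕ) (t : ℕ → ℝ)
    (ht : Monotone t ∧ t 0 = u ∧ t n = v) :
    (∑ i ∈ Finset.range n, ENNReal.ofReal (J (f (t i)) (f (t (i + 1))))) ≤ pieceLen J f u v :=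
  le_iSup_of_le n (le_iSup_of_le t (le_iSup_of_le ht le_rfl))

lemma pieceLen_le {B : ℝ≥0∞} (h : ∀ (n : ℕ) (t : ℕ → ℝ), Monotone t → t 0 = u → t n = v →
    (∑ i ∈ Finset.range n, ENNReal.ofReal (J (f (t i)) (f (t (i + 1))))) ≤ B) :
    pieceLen J f u v ≤ B :=
  iSup_le fun n => iSup_le fun t => iSup_le fun ht => h n t ht.1 ht.2.1 ht.2.2

lemma chain_mem {t : ℕ → ℝ} {n : ℕ} (htm : Monotone t) (ht0 : t 0 = u) (htn : t n = v)
    {i : ℕ} (hi : i ≤ n) : t i ∈ Set.Icc u v :=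
  ⟨ht0 ▸ htm (Nat.zero_le i), htn ▸ htm hi⟩

lemma pieceLen_self (h0 : ∀ z : X, J z z = 0) (f : ℝ → X) (u : ℝ) :
    pieceLen J f u u = 0 := by
  refine le_antisymm (pieceLen_le fun n t htm ht0 htn => ?_) (zero_le)
  refine le_of_eq (Finset.sum_eq_zero fun i hi => ?_)
  rw [Finset.mem_range] at hi
  have h1 : t i = u := le_antisymm (htn ▸ htm (by omega)) (ht0 ▸ htm (Nat.zero_le i))
  have h2 : t (i + 1) = u := le_antisymm (htn ▸ htm (by omega)) (ht0 ▸ htm (Nat.zero_le _))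
  simp [h1, h2, h0]

lemma pieceLen_superadd (huv : u ≤ v) (hvw : v ≤ w) :
    pieceLen J f u v + pieceLen J f v w ≤ pieceLen J f u w := by
  haveI := chain_nonempty (u := u) (v := v) huv
  haveI := chain_nonempty (u := v) (v := w) hvw
  rw [pieceLen_eq_chain J f u v, pieceLen_eq_chain J f v w]
  refine ENNReal.iSup_add_iSup_le fun c d => ?_
  obtain ⟨⟨n, t⟩, htm, ht0, htn⟩ := c
  obtain ⟨⟨m, s⟩, hsm, hs0, hsm'⟩ := d
  dsimp only at htm ht0 htn hsm hs0 hsm'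
  set T : ℕ → ℝ := fun i => if i ≤ n then t i else s (i - n) with hT
  have hTm : Monotone T := by
    intro a b hab
    by_cases ha : a ≤ n
    · by_cases hb : b ≤ n
      · simp only [hT, ha, hb, if_pos]; exact htm hab
      · simp only [hT, ha, hb, if_pos, if_neg, not_false_iff]
        calc t a ≤ t n := htm ha
        _ = s 0 := by rw [htn, hs0]
        _ ≤ s (b - n) := hsm (Nat.zero_le _)
    · have hb : ¬ b ≤ n := by omega
      simp only [hT, ha, hb, if_neg, not_false_iff]
      exact hsm (by omega)
  have hT0 : T 0 = u := by simp [hT, ht0]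
  have hTe : T (n + m) = w := by
    by_cases hm : m = 0
    · subst hm
      simp only [hT, add_zero, le_refl, if_pos, htn]
      rw [← hs0, hsm']
    · simp only [hT, add_tsub_cancel_left]
      rw [if_neg (by omega), hsm']
  have hsum : chainSum J f ⟨⟨n, t⟩, htm, ht0, htn⟩ + chainSum J f ⟨⟨m, s⟩, hsm, hs0, hsm'⟩ =
      ∑ i ∈ Finset.range (n + m), ENNReal.ofReal (J (f (T i)) (f (T (i + 1)))) := by
    rw [Finset.sum_range_add]
    congr 1
    · refine Finset.sum_congr rfl fun i hi => ?_
      rw [Finset.mem_range] at hi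
      have h1 : T i = t i := by simp [hT, (by omega : i ≤ n)]
      have h2 : T (i + 1) = t (i + 1) := by simp [hT, (by omega : i + 1 ≤ n)]
      rw [h1, h2]
    · refine Finset.sum_congr rfl fun i hi => ?_
      rw [Finset.mem_range] at hi
      have h1 : T (n + i) = s i := by
        by_cases hi0 : i = 0
        · subst hi0
          simp only [hT, add_zero, le_refl, if_pos, htn]
          rw [← hs0]
        · simp only [hT]
          rw [if_neg (by omega)]
          congr 1
          omega
      have h2 : T (n + i + 1) = s (i + 1) := by
        simp only [hT]
        rw [if_neg (by omega)]
        congr 1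
        omega
      rw [h1, h2]
  rw [hsum]
  exact le_pieceLen J f (n + m) T ⟨hTm, hT0, hTe⟩

lemma pieceLen_subadd (h0 : ∀ z : X, J z z = 0)
    (htri : ∀ s ∈ Set.Icc u w, ∀ t ∈ Set.Icc u w, ∀ r ∈ Set.Icc u w,
      J (f s) (f r) ≤ J (f s) (f t) + J (f t) (f r))
    (huv : u ≤ v) (hvw : v ≤ w) :
    pieceLen J f u w ≤ pieceLen J f u v + pieceLen J f v w := by
  refine pieceLen_le fun n t htm ht0 htn => ?_
  have key : ∑ i ∈ Finset.range n, ENNReal.ofReal (J (f (t i)) (f (t (i + 1)))) ≤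
      ∑ i ∈ Finset.range n,
        (ENNReal.ofReal (J (f (min (t i) v)) (f (min (t (i + 1)) v))) +
         ENNReal.ofReal (J (f (max (t i) v)) (f (max (t (i + 1)) v)))) := by
    refine Finset.sum_le_sum fun i hi => ?_
    rw [Finset.mem_range] at hi
    have hmono : t i ≤ t (i + 1) := htm (by omega)
    rcases le_total v (t i) with h | h
    · have e1 : min (t i) v = v := min_eq_right h
      have e2 : min (t (i + 1)) v = v := min_eq_right (h.trans hmono)
      have e3 : max (t i) v = t i := max_eq_left h
      have e4 : max (t (i + 1)) v = t (i + 1) := max_eq_left (h.trans hmono)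
      rw [e1, e2, e3, e4, h0, ENNReal.ofReal_zero, zero_add]
    · rcases le_total (t (i + 1)) v with h2 | h2
      · have e1 : min (t i) v = t i := min_eq_left (hmono.trans h2)
        have e2 : min (t (i + 1)) v = t (i + 1) := min_eq_left h2
        have e3 : max (t i) v = v := max_eq_right (hmono.trans h2)
        have e4 : max (t (i + 1)) v = v := max_eq_right h2
        rw [e1, e2, e3, e4, h0, ENNReal.ofReal_zero, add_zero]
      · have e1 : min (t i) v = t i := min_eq_left h
        have e2 : min (t (i + 1)) v = v := min_eq_right h2
        have e3 : max (t i) v = v := max_eq_right h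
        have e4 : max (t (i + 1)) v = t (i + 1) := max_eq_left h2
        rw [e1, e2, e3, e4]
        have hmem1 := chain_mem htm ht0 htn (by omega : i ≤ n)
        have hmem2 := chain_mem htm ht0 htn (by omega : i + 1 ≤ n)
        have := htri _ hmem1 _ ⟨huv, hvw⟩ _ hmem2
        exact (ENNReal.ofReal_le_ofReal this).trans ENNReal.ofReal_add_le
  rw [Finset.sum_add_distrib] at key
  refine key.trans (add_le_add ?_ ?_)
  · refine le_pieceLen J f n (fun i => min (t i) v) ⟨?_, ?_, ?_⟩
    · exact fun a b hab => min_le_min (htm hab) le_rfl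
    · show min (t 0) v = u
      rw [ht0]; exact min_eq_left huv
    · show min (t n) v = v
      rw [htn]; exact min_eq_right hvw
  · refine le_pieceLen J f n (fun i => max (t i) v) ⟨?_, ?_, ?_⟩
    · exact fun a b hab => max_le_max (htm hab) le_rfl
    · show max (t 0) v = v
      rw [ht0]; exact max_eq_right huv
    · show max (t n) v = w
      rw [htn]; exact max_eq_left hvw

lemma pieceLen_le_of_lip {C : ℝ}
    (hC : ∀ s ∈ Set.Icc u v, ∀ t ∈ Set.Icc u v, J (f s) (f t) ≤ C * |s - t|)
    (hC0 : 0 ≤ C) :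
    pieceLen J f u v ≤ ENNReal.ofReal (C * (v - u)) := by
  refine pieceLen_le fun n t htm ht0 htn => ?_
  calc ∑ i ∈ Finset.range n, ENNReal.ofReal (J (f (t i)) (f (t (i + 1))))
      ≤ ∑ i ∈ Finset.range n, ENNReal.ofReal (C * (t (i + 1) - t i)) := by
        refine Finset.sum_le_sum fun i hi => ?_
        rw [Finset.mem_range] at hi
        refine ENNReal.ofReal_le_ofReal ?_
        have h1 := hC _ (chain_mem htm ht0 htn (by omega : i ≤ n))
          _ (chain_mem htm ht0 htn (by omega : i + 1 ≤ n))
        rwa [abs_sub_comm, abs_of_nonneg (sub_nonneg.2 (htm (by omega : i ≤ i + 1)))] at h1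
    _ = ENNReal.ofReal (∑ i ∈ Finset.range n, C * (t (i + 1) - t i)) := by
        rw [ENNReal.ofReal_sum_of_nonneg]
        intro i hi
        rw [Finset.mem_range] at hi
        exact mul_nonneg hC0 (sub_nonneg.2 (htm (by omega : i ≤ i + 1)))
    _ = ENNReal.ofReal (C * (v - u)) := by
        rw [← Finset.mul_sum, Finset.sum_range_sub, ht0, htn]

lemma pieceLen_le_map {u' v' : ℝ} (φ : ℝ → ℝ) (hφ : MonotoneOn φ (Set.Icc u v)) (huv : u ≤ v)
    (hu : φ u = u') (hv : φ v = v') (hval : ∀ s ∈ Set.Icc u v, g s = f (φ s)) :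
    pieceLen J g u v ≤ pieceLen J f u' v' := by
  refine pieceLen_le fun n t htm ht0 htn => ?_
  set T : ℕ → ℝ := fun i => φ (min (t i) v) with hT
  have hmem : ∀ i, min (t i) v ∈ Set.Icc u v := fun i =>
    ⟨le_min (ht0 ▸ htm (Nat.zero_le i)) huv, min_le_right _ _⟩
  have hTm : Monotone T := fun a b hab => hφ (hmem a) (hmem b) (min_le_min (htm hab) le_rfl)
  have hT0 : T 0 = u' := by simp only [hT]; rw [ht0, min_eq_left huv, hu]
  have hTn : T n = v' := by simp only [hT]; rw [htn, min_self, hv]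
  have hsum : ∑ i ∈ Finset.range n, ENNReal.ofReal (J (g (t i)) (g (t (i + 1)))) =
      ∑ i ∈ Finset.range n, ENNReal.ofReal (J (f (T i)) (f (T (i + 1)))) := by
    refine Finset.sum_congr rfl fun i hi => ?_
    rw [Finset.mem_range] at hi
    have m1 := chain_mem htm ht0 htn (by omega : i ≤ n)
    have m2 := chain_mem htm ht0 htn (by omega : i + 1 ≤ n)
    have e1 : T i = φ (t i) := by simp only [hT]; rw [min_eq_left m1.2]
    have e2 : T (i + 1) = φ (t (i + 1)) := by simp only [hT]; rw [min_eq_left m2.2]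
    rw [e1, e2, hval _ m1, hval _ m2]
  rw [hsum]
  exact le_pieceLen J f n T ⟨hTm, hT0, hTn⟩

lemma pieceLen_le_antimap {u' v' : ℝ} (hsymm : ∀ a b : X, J a b = J b a) (φ : ℝ → ℝ)
    (hφ : AntitoneOn φ (Set.Icc u v)) (huv : u ≤ v)
    (hu : φ u = v') (hv : φ v = u') (hval : ∀ s ∈ Set.Icc u v, g s = f (φ s)) :
    pieceLen J g u v ≤ pieceLen J f u' v' := by
  refine pieceLen_le fun n t htm ht0 htn => ?_
  set T : ℕ → ℝ := fun i => φ (t (n - i)) with hT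
  have hmem : ∀ i, t (n - i) ∈ Set.Icc u v := fun i => chain_mem htm ht0 htn (Nat.sub_le n i)
  have hTm : Monotone T := fun a b hab => hφ (hmem b) (hmem a) (htm (Nat.sub_le_sub_left hab n))
  have hT0 : T 0 = u' := by simp only [hT]; rw [Nat.sub_zero, htn, hv]
  have hTn : T n = v' := by simp only [hT]; rw [Nat.sub_self, ht0, hu]
  have hsum : ∑ i ∈ Finset.range n, ENNReal.ofReal (J (g (t i)) (g (t (i + 1)))) =
      ∑ i ∈ Finset.range n, ENNReal.ofReal (J (f (T i)) (f (T (i + 1)))) := by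
    rw [← Finset.sum_range_reflect
      (fun i => ENNReal.ofReal (J (g (t i)) (g (t (i + 1))))) n]
    refine Finset.sum_congr rfl fun j hj => ?_
    rw [Finset.mem_range] at hj
    have e0 : n - 1 - j = n - (j + 1) := by omega
    have e0' : n - 1 - j + 1 = n - j := by omega
    have e1 : T j = φ (t (n - j)) := rfl
    have e2 : T (j + 1) = φ (t (n - (j + 1))) := rfl
    rw [e0', e0, e1, e2, ← hval _ (hmem j), ← hval _ (hmem (j + 1))]
    rw [hsymm]
  rw [hsum]
  exact le_pieceLen J f n T ⟨hTm, hT0, hTn⟩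

lemma le_pieceLen_single (huv : u ≤ v) :
    ENNReal.ofReal (J (f u) (f v)) ≤ pieceLen J f u v := by
  refine le_trans ?_ (le_pieceLen J f (u := u) (v := v) 1 (fun i => if i = 0 then u else v)
    ⟨?_, by simp, by simp⟩)
  · simp
  · intro a b hab
    by_cases ha : a = 0
    · subst ha
      by_cases hb : b = 0 <;> simp [hb, huv]
    · have hb : b ≠ 0 := by omega
      simp [ha, hb]
lemma partition_mono {P : ℕ → ℝ} {N : ℕ} (h : ∀ i < N, P i < P (i + 1)) :
    ∀ {a b : ℕ}, a ≤ b → b ≤ N → P a ≤ P b := by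
  intro a b hab hbN
  induction hab with
  | refl => exact le_rfl
  | @step m hm ih =>
    exact (ih (by omega)).trans (le_of_lt (h m (by omega)))

lemma DJN_le {N : ℕ} {x y : X} {f : ℝ → X} {P : ℕ → ℝ}
    (h : IsPML J N 0 1 f P ∧ f 0 = x ∧ f 1 = y) :
    DJN J N x y ≤ pmlLength J N f P :=
  iInf_le_of_le f (iInf_le_of_le P (iInf_le_of_le h le_rfl))

lemma exists_of_DJN_lt {N : ℕ} {x y : X} {B : ℝ≥0∞} (h : DJN J N x y < B) :
    ∃ f P, (IsPML J N 0 1 f P ∧ f 0 = x ∧ f 1 = y) ∧ pmlLength J N f P < B := by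
  simp only [DJN, iInf_lt_iff] at h
  obtain ⟨f, P, hc, hlt⟩ := h
  exact ⟨f, P, hc, hlt⟩

lemma DJ_le_DJN {N : ℕ} {x y : X} : DJ J x y ≤ DJN J N x y := iInf_le _ N

lemma pieceLen_const (h0 : ∀ z : X, J z z = 0) (z : X) (u v : ℝ) :
    pieceLen J (fun _ => z) u v = 0 := by
  refine le_antisymm (pieceLen_le fun n t htm ht0 htn => ?_) (zero_le)
  simp [h0]

lemma DJ_self (h0 : ∀ z : X, J z z = 0) (z : X) : DJ J z z = 0 := by
  refine le_antisymm ?_ (zero_le)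
  refine le_trans DJ_le_DJN (le_trans (DJN_le (N := 1) (f := fun _ => z)
    (P := fun i => (i : ℝ)) ⟨⟨by simp, by simp, by intro i _; simp, ?_⟩, rfl, rfl⟩) ?_)
  · intro i _
    constructor
    · intro s _ t _ r _
      simp [h0]
    · exact ⟨0, fun s _ t _ => by simp [h0]⟩
  · rw [pmlLength]
    simp [pieceLen_const h0]

lemma DJN_symm_le (hsymm : ∀ a b : X, J a b = J b a) (N : ℕ) (x y : X) :
    DJN J N y x ≤ DJN J N x y := by
  refine le_iInf fun f => le_iInf fun P => le_iInf fun h => ?_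
  obtain ⟨⟨hP0, hPN, hPlt, hPiece⟩, hf0, hf1⟩ := h
  set f' : ℝ → X := fun u => f (1 - u) with hf'
  set P' : ℕ → ℝ := fun i => 1 - P (N - i) with hP'
  have hmem : ∀ i, i < N → ∀ s ∈ Set.Icc (P' i) (P' (i + 1)),
      1 - s ∈ Set.Icc (P (N - (i + 1))) (P (N - i)) := by
    intro i hi s hs
    obtain ⟨h1, h2⟩ := hs
    simp only [hP'] at h1 h2
    constructor <;> linarith
  have hPML : IsPML J N 0 1 f' P' := by
    refine ⟨by simp [hP', hPN], by simp [hP', hP0], ?_, ?_⟩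
    · intro i hi
      have hj : N - i = (N - (i + 1)) + 1 := by omega
      have := hPlt (N - (i + 1)) (by omega)
      simp only [hP']
      rw [hj]
      linarith
    · intro i hi
      have hj : N - i = (N - (i + 1)) + 1 := by omega
      constructor
      · intro s hs t ht r hr
        have h1 := (hPiece (N - (i + 1)) (by omega)).1
        rw [← hj] at h1
        exact h1 _ (hmem i hi s hs) _ (hmem i hi t ht) _ (hmem i hi r hr)
      · obtain ⟨C, hC⟩ := (hPiece (N - (i + 1)) (by omega)).2
        rw [← hj] at hC
        refine ⟨C, fun s hs t ht => ?_⟩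
        have := hC _ (hmem i hi s hs) _ (hmem i hi t ht)
        have habs : |1 - s - (1 - t)| = |s - t| := by
          rw [abs_sub_comm]; ring_nf
        rw [habs] at this
        exact this
  have hlen : pmlLength J N f' P' ≤ pmlLength J N f P := by
    rw [pmlLength, pmlLength,
      ← Finset.sum_range_reflect (fun i => pieceLen J f (P i) (P (i + 1))) N]
    refine Finset.sum_le_sum fun i hi => ?_
    rw [Finset.mem_range] at hi
    have hj : N - (i + 1) = N - 1 - i := by omega
    have hle : P' i ≤ P' (i + 1) := le_of_lt (hPML.2.2.1 i hi)
    have hstep : pieceLen J f' (P' i) (P' (i + 1)) ≤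
        pieceLen J f (P (N - (i + 1))) (P (N - i)) := by
      refine pieceLen_le_antimap hsymm (fun s => 1 - s)
        (fun a _ b _ hab => by dsimp only; linarith) hle ?_ ?_ (fun s _ => rfl)
      · show 1 - P' i = P (N - i)
        simp [hP']
      · show 1 - P' (i + 1) = P (N - (i + 1))
        simp [hP']
    have hj2 : N - i = N - 1 - i + 1 := by omega
    rw [hj, hj2] at hstep
    exact hstep
  refine le_trans (DJN_le ⟨hPML, ?_, ?_⟩) hlen
  · show f (1 - 0) = y
    rw [show (1:ℝ) - 0 = 1 by ring, hf1]
  · show f (1 - 1) = x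
    rw [show (1:ℝ) - 1 = 0 by ring, hf0]

lemma DJ_symm (hsymm : ∀ a b : X, J a b = J b a) (x y : X) : DJ J x y = DJ J y x :=
  le_antisymm (iInf_mono fun N => DJN_symm_le hsymm N y x)
    (iInf_mono fun N => DJN_symm_le hsymm N x y)
lemma concat_le {M N : ℕ} {x y z : X} {f g : ℝ → X} {P Q : ℕ → ℝ}
    (hf : IsPML J M 0 1 f P ∧ f 0 = x ∧ f 1 = y)
    (hg : IsPML J N 0 1 g Q ∧ g 0 = y ∧ g 1 = z) :
    DJN J (M + N) x z ≤ pmlLength J M f P + pmlLength J N g Q := by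
  obtain ⟨⟨hP0, hPM, hPlt, hPiece⟩, hf0, hf1⟩ := hf
  obtain ⟨⟨hQ0, hQN, hQlt, hQiece⟩, hg0, hg1⟩ := hg
  have hM : 0 < M := by
    rcases Nat.eq_zero_or_pos M with h | h
    · exfalso; rw [h] at hPM; rw [hP0] at hPM; norm_num at hPM
    · exact h
  have hN : 0 < N := by
    rcases Nat.eq_zero_or_pos N with h | h
    · exfalso; rw [h] at hQN; rw [hQ0] at hQN; norm_num at hQN
    · exact h
  have hPmono : ∀ a b : ℕ, a ≤ b → b ≤ M → P a ≤ P b :=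
    fun a b h1 h2 => partition_mono hPlt h1 h2
  have hQmono : ∀ a b : ℕ, a ≤ b → b ≤ N → Q a ≤ Q b :=
    fun a b h1 h2 => partition_mono hQlt h1 h2
  have hQnonneg : ∀ i, 0 ≤ Q i ∨ i > N := by
    intro i
    rcases le_or_gt i N with h | h
    · left; rw [← hQ0]; exact hQmono 0 i (Nat.zero_le i) h
    · right; exact h
  set h : ℝ → X := fun u => if u ≤ (1:ℝ)/2 then f (2*u) else g (2*u - 1) with hh
  set R : ℕ → ℝ := fun i => if i ≤ M then P i / 2 else (1 + Q (i - M)) / 2 with hR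
  have hRleft : ∀ i ≤ M, R i = P i / 2 := fun i hi => by simp [hR, hi]
  have hRright : ∀ i, M ≤ i → i ≤ M + N → R i = (1 + Q (i - M)) / 2 := by
    intro i h1 h2
    rcases Nat.eq_or_lt_of_le h1 with rfl | hlt
    · simp [hR, hPM, hQ0]
    · simp only [hR]
      rw [if_neg (by omega)]
  -- values of h on left pieces
  have hvalL : ∀ i < M, ∀ s ∈ Set.Icc (R i) (R (i + 1)), h s = f (2 * s) ∧
      2 * s ∈ Set.Icc (P i) (P (i + 1)) := by
    intro i hi s hs
    rw [hRleft i (by omega), hRleft (i + 1) (by omega)] at hs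
    obtain ⟨h1, h2⟩ := hs
    have hs2 : s ≤ 1/2 := by
      have hPi1 : P (i + 1) ≤ P M := hPmono (i + 1) M (by omega) le_rfl
      rw [hPM] at hPi1
      linarith
    exact ⟨by simp only [hh]; rw [if_pos hs2], ⟨by linarith, by linarith⟩⟩
  have hvalR : ∀ i, M ≤ i → i < M + N → ∀ s ∈ Set.Icc (R i) (R (i + 1)), h s = g (2 * s - 1) ∧
      2 * s - 1 ∈ Set.Icc (Q (i - M)) (Q (i - M + 1)) := by
    intro i h1 h2 s hs
    rw [hRright i h1 (by omega), hRright (i + 1) (by omega) (by omega)] at hs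
    have hidx : i + 1 - M = i - M + 1 := by omega
    rw [hidx] at hs
    obtain ⟨hs1, hs2⟩ := hs
    have hQi : 0 ≤ Q (i - M) := by
      rcases hQnonneg (i - M) with h | h
      · exact h
      · omega
    have hmem : 2 * s - 1 ∈ Set.Icc (Q (i - M)) (Q (i - M + 1)) :=
      ⟨by linarith, by linarith⟩
    constructor
    · by_cases hhalf : s ≤ 1/2
      · have hseq : s = 1/2 := le_antisymm hhalf (by linarith)
        have : h s = f (2 * s) := by simp only [hh]; rw [if_pos hhalf]
        rw [this, hseq]
        norm_num [hf1, hg0]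
      · simp only [hh]; rw [if_neg hhalf]
    · exact hmem
  have hPML : IsPML J (M + N) 0 1 h R := by
    refine ⟨by simp [hR, hP0], ?_, ?_, ?_⟩
    · rw [hRright (M + N) (by omega) le_rfl]
      simp [hQN]
    · intro i hi
      by_cases him : i < M
      · rw [hRleft i (by omega), hRleft (i + 1) (by omega)]
        have := hPlt i him
        linarith
      · have h1 : M ≤ i := by omega
        rw [hRright i h1 (by omega), hRright (i + 1) (by omega) (by omega)]
        have hidx : i + 1 - M = i - M + 1 := by omega
        rw [hidx]
        have := hQlt (i - M) (by omega)
        linarith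
    · intro i hi
      by_cases him : i < M
      · obtain ⟨htriP, C, hC⟩ := hPiece i him
        constructor
        · intro s hs t ht r hr
          rw [(hvalL i him s hs).1, (hvalL i him t ht).1, (hvalL i him r hr).1]
          exact htriP _ (hvalL i him s hs).2 _ (hvalL i him t ht).2 _ (hvalL i him r hr).2
        · refine ⟨2 * C, fun s hs t ht => ?_⟩
          rw [(hvalL i him s hs).1, (hvalL i him t ht).1]
          have := hC _ (hvalL i him s hs).2 _ (hvalL i him t ht).2
          have habs : |2 * s - 2 * t| = 2 * |s - t| := by
            rw [show 2 * s - 2 * t = 2 * (s - t) by ring, abs_mul]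
            norm_num
          rw [habs] at this
          linarith
      · have h1 : M ≤ i := by omega
        obtain ⟨htriQ, C, hC⟩ := hQiece (i - M) (by omega)
        constructor
        · intro s hs t ht r hr
          rw [(hvalR i h1 hi s hs).1, (hvalR i h1 hi t ht).1, (hvalR i h1 hi r hr).1]
          exact htriQ _ (hvalR i h1 hi s hs).2 _ (hvalR i h1 hi t ht).2 _ (hvalR i h1 hi r hr).2
        · refine ⟨2 * C, fun s hs t ht => ?_⟩
          rw [(hvalR i h1 hi s hs).1, (hvalR i h1 hi t ht).1]
          have := hC _ (hvalR i h1 hi s hs).2 _ (hvalR i h1 hi t ht).2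
          have habs : |2 * s - 1 - (2 * t - 1)| = 2 * |s - t| := by
            rw [show 2 * s - 1 - (2 * t - 1) = 2 * (s - t) by ring, abs_mul]
            norm_num
          rw [habs] at this
          linarith
  have hend : h 0 = x ∧ h 1 = z := by
    constructor
    · have : (0:ℝ) ≤ 1/2 := by norm_num
      simp only [hh, this, if_pos]
      rw [mul_zero, hf0]
    · have : ¬ ((1:ℝ) ≤ 1/2) := by norm_num
      simp only [hh, this, if_neg, not_false_iff]
      rw [show 2 * (1:ℝ) - 1 = 1 by ring, hg1]
  refine le_trans (DJN_le ⟨hPML, hend.1, hend.2⟩) ?_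
  rw [pmlLength, Finset.sum_range_add, pmlLength, pmlLength]
  refine add_le_add (Finset.sum_le_sum fun i hi => ?_) (Finset.sum_le_sum fun i hi => ?_)
  · rw [Finset.mem_range] at hi
    have hle : R i ≤ R (i + 1) := le_of_lt (hPML.2.2.1 i (by omega))
    refine pieceLen_le_map (fun s => 2 * s) (fun a _ b _ hab => by dsimp only; linarith)
      hle ?_ ?_ (fun s hs => (hvalL i hi s hs).1)
    · rw [hRleft i (by omega)]; ring
    · rw [hRleft (i + 1) (by omega)]; ring
  · rw [Finset.mem_range] at hi
    have hle : R (M + i) ≤ R (M + i + 1) := le_of_lt (hPML.2.2.1 (M + i) (by omega))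
    have hidx : M + i - M = i := by omega
    have hstep : pieceLen J h (R (M + i)) (R (M + i + 1)) ≤
        pieceLen J g (2 * R (M + i) - 1) (2 * R (M + i + 1) - 1) :=
      pieceLen_le_map (fun s => 2 * s - 1) (fun a _ b _ hab => by dsimp only; linarith)
        hle rfl rfl (fun s hs => by
          rw [(hvalR (M + i) (by omega) (by omega) s hs).1])
    have he1 : 2 * R (M + i) - 1 = Q i := by
      rw [hRright (M + i) (by omega) (by omega), hidx]; ring
    have he2 : 2 * R (M + i + 1) - 1 = Q (i + 1) := by
      rw [hRright (M + i + 1) (by omega) (by omega), show M + i + 1 - M = i + 1 by omega]; ring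
    rw [he1, he2] at hstep
    exact hstep

lemma DJ_triangle (x y z : X) : DJ J x z ≤ DJ J x y + DJ J y z := by
  rw [DJ, DJ, ENNReal.iInf_add]
  refine le_iInf fun M => ?_
  rw [DJ, ENNReal.add_iInf]
  refine le_iInf fun N => ?_
  refine ENNReal.le_of_forall_pos_le_add fun ε hε hlt => ?_
  have hMfin : DJN J M x y ≠ ⊤ := fun h => by simp [h] at hlt
  have hNfin : DJN J N y z ≠ ⊤ := fun h => by simp [h] at hlt
  have hε2 : ((ε : ℝ≥0∞) / 2) ≠ 0 := by
    simp [ENNReal.div_eq_zero_iff, hε.ne']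
  obtain ⟨f, P, hfc, hflt⟩ := exists_of_DJN_lt (ENNReal.lt_add_right hMfin hε2)
  obtain ⟨g, Q, hgc, hglt⟩ := exists_of_DJN_lt (ENNReal.lt_add_right hNfin hε2)
  calc DJ J x z ≤ DJN J (M + N) x z := DJ_le_DJN
  _ ≤ pmlLength J M f P + pmlLength J N g Q := concat_le hfc hgc
  _ ≤ (DJN J M x y + ε / 2) + (DJN J N y z + ε / 2) := add_le_add hflt.le hglt.le
  _ = DJN J M x y + DJN J N y z + ε := by
    rw [add_add_add_comm, ENNReal.add_halves]
lemma J_le_pow_sum {σ : ℝ} (hnonneg : ∀ x y : X, 0 ≤ J x y) (h0 : ∀ z : X, J z z = 0)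
    (hσ : 1 ≤ σ) (htri : ∀ x y z : X, J x y ≤ σ * (J x z + J z y)) (n : ℕ) (z : ℕ → X) :
    J (z 0) (z n) ≤ σ ^ n * ∑ i ∈ Finset.range n, J (z i) (z (i + 1)) := by
  induction n with
  | zero => simp [h0]
  | succ n ih =>
    have hσ0 : 0 ≤ σ := by linarith
    have hS : 0 ≤ ∑ i ∈ Finset.range n, J (z i) (z (i + 1)) :=
      Finset.sum_nonneg fun i _ => hnonneg _ _
    have hpow : σ ≤ σ ^ (n + 1) := by
      calc σ = σ ^ 1 := (pow_one σ).symm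
      _ ≤ σ ^ (n + 1) := pow_le_pow_right₀ hσ (by omega)
    calc J (z 0) (z (n + 1)) ≤ σ * (J (z 0) (z n) + J (z n) (z (n + 1))) := htri _ _ _
    _ ≤ σ * (σ ^ n * ∑ i ∈ Finset.range n, J (z i) (z (i + 1)) + J (z n) (z (n + 1))) := by
        refine mul_le_mul_of_nonneg_left ?_ hσ0
        exact add_le_add ih le_rfl
    _ = σ ^ (n + 1) * ∑ i ∈ Finset.range n, J (z i) (z (i + 1)) + σ * J (z n) (z (n + 1)) := by
        ring
    _ ≤ σ ^ (n + 1) * ∑ i ∈ Finset.range n, J (z i) (z (i + 1)) +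
        σ ^ (n + 1) * J (z n) (z (n + 1)) := by
        refine add_le_add le_rfl (mul_le_mul_of_nonneg_right hpow (hnonneg _ _))
    _ = σ ^ (n + 1) * ∑ i ∈ Finset.range (n + 1), J (z i) (z (i + 1)) := by
        rw [Finset.sum_range_succ]; ring

lemma pml_lower {σ : ℝ} (hnonneg : ∀ x y : X, 0 ≤ J x y) (h0 : ∀ z : X, J z z = 0)
    (hσ : 1 ≤ σ) (htri : ∀ x y z : X, J x y ≤ σ * (J x z + J z y))
    {N : ℕ} {x y : X} {f : ℝ → X} {P : ℕ → ℝ}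
    (h : IsPML J N 0 1 f P ∧ f 0 = x ∧ f 1 = y) :
    ENNReal.ofReal (J x y / σ ^ N) ≤ pmlLength J N f P := by
  obtain ⟨⟨hP0, hPN, hPlt, hPiece⟩, hf0, hf1⟩ := h
  have hσN : (0:ℝ) < σ ^ N := pow_pos (by linarith) N
  have key : J x y / σ ^ N ≤ ∑ i ∈ Finset.range N, J (f (P i)) (f (P (i + 1))) := by
    rw [div_le_iff₀ hσN]
    have := J_le_pow_sum hnonneg h0 hσ htri N (fun i => f (P i))
    rw [hP0, hPN, hf0, hf1] at this
    calc J x y ≤ σ ^ N * ∑ i ∈ Finset.range N, J (f (P i)) (f (P (i + 1))) := this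
    _ = (∑ i ∈ Finset.range N, J (f (P i)) (f (P (i + 1)))) * σ ^ N := by ring
  calc ENNReal.ofReal (J x y / σ ^ N)
      ≤ ENNReal.ofReal (∑ i ∈ Finset.range N, J (f (P i)) (f (P (i + 1)))) :=
        ENNReal.ofReal_le_ofReal key
  _ = ∑ i ∈ Finset.range N, ENNReal.ofReal (J (f (P i)) (f (P (i + 1)))) :=
        ENNReal.ofReal_sum_of_nonneg fun i _ => hnonneg _ _
  _ ≤ ∑ i ∈ Finset.range N, pieceLen J f (P i) (P (i + 1)) :=
        Finset.sum_le_sum fun i hi =>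
          le_pieceLen_single (le_of_lt (hPlt i (Finset.mem_range.1 hi)))
  _ = pmlLength J N f P := rfl

lemma eq_of_DJ_eq_zero {σ : ℝ} (hnonneg : ∀ x y : X, 0 ≤ J x y)
    (hiff : ∀ x y : X, J x y = 0 ↔ x = y)
    (hσ : 1 ≤ σ) (htri : ∀ x y z : X, J x y ≤ σ * (J x z + J z y))
    {x y : X} {N : ℕ} (hDJN : DJN J N x y = DJ J x y) (h : DJ J x y = 0) : x = y := by
  have h0 : ∀ z : X, J z z = 0 := fun z => (hiff z z).2 rfl
  have hσN : (0:ℝ) < σ ^ N := pow_pos (by linarith) N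
  have hJ0 : J x y ≤ 0 := by
    by_contra hJ
    push_neg at hJ
    have hpos : (0:ℝ≥0∞) < ENNReal.ofReal (J x y / σ ^ N) := by
      rw [ENNReal.ofReal_pos]
      positivity
    have hlt : DJN J N x y < ENNReal.ofReal (J x y / σ ^ N) := by
      rw [hDJN, h]; exact hpos
    obtain ⟨f, P, hc, hlen⟩ := exists_of_DJN_lt hlt
    exact absurd (pml_lower hnonneg h0 hσ htri hc) (not_le.2 hlen)
  exact (hiff x y).1 (le_antisymm hJ0 (hnonneg x y))
end QM15

/-- If `(X,J)` is a perfect quasimetric space (for each `x,y`, `D_J^{(N)}(x,y)`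
is a finite constant equal to `D_J(x,y)` for all large `N`) and the geodesic
problem over `Path_N(x,y)` has a minimizer for all sufficiently large `N`, then
`(X,D_J)` is a length space: for all `x,y` with `L = D_J(x,y)`, there is a
curve `f : [0,L] → X` from `x` to `y` with `D_J(f t, f s) = |t−s|`. -/
theorem stmt_15 (J : X → X → ℝ) (σ : ℝ)
    (hnonneg : ∀ x y, 0 ≤ J x y)
    (hiff : ∀ x y, J x y = 0 ↔ x = y)
    (hsymm : ∀ x y, J x y = J y x)
    (hσ : 1 ≤ σ)
    (htri : ∀ x y z, J x y ≤ σ * (J x z + J z y))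
    (hperfect : ∀ x y : X, DJ J x y ≠ ⊤ ∧
      ∃ N₀ : ℕ, ∀ N ≥ N₀, DJN J N x y = DJ J x y)
    (hmin : ∀ x y : X, ∃ N₀ : ℕ, ∀ N ≥ N₀,
      ∃ (f : ℝ → X) (P : ℕ → ℝ), (IsPML J N 0 1 f P ∧ f 0 = x ∧ f 1 = y) ∧
        pmlLength J N f P = DJN J N x y) :
    ∀ x y : X, ∃ f : ℝ → X,
      f 0 = x ∧ f ((DJ J x y).toReal) = y ∧
      ∀ t ∈ Set.Icc (0 : ℝ) ((DJ J x y).toReal),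
        ∀ s ∈ Set.Icc (0 : ℝ) ((DJ J x y).toReal),
          DJ J (f t) (f s) = ENNReal.ofReal |t - s| := by
  classical
  have h0 : ∀ z : X, J z z = 0 := fun z => (hiff z z).2 rfl
  intro x y
  obtain ⟨hLfin, N₁, hN₁⟩ := hperfect x y
  obtain ⟨N₂, hN₂⟩ := hmin x y
  obtain ⟨g, P, ⟨hPML, hg0, hg1⟩, hglen⟩ := hN₂ (max N₁ N₂) (le_max_right _ _)
  obtain ⟨hP0, hPN, hPlt, hPiece⟩ := hPML
  set N := max N₁ N₂ with hNdef
  have hDJN : DJN J N x y = DJ J x y := hN₁ N (le_max_left _ _)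
  have hlen : pmlLength J N g P = DJ J x y := hglen.trans hDJN
  set Lr := (DJ J x y).toReal with hLrdef
  have hPmono : ∀ a b : ℕ, a ≤ b → b ≤ N → P a ≤ P b :=
    fun a b h1 h2 => QM15.partition_mono hPlt h1 h2
  have hPle : ∀ i, i < N → P i ≤ P (i + 1) := fun i hi => le_of_lt (hPlt i hi)
  -- Lipschitz constants for each piece
  have hCex : ∀ i : ℕ, ∃ C : ℝ, 0 ≤ C ∧ (i < N → ∀ s ∈ Set.Icc (P i) (P (i + 1)),
      ∀ t ∈ Set.Icc (P i) (P (i + 1)), J (g s) (g t) ≤ C * |s - t|) := by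
    intro i
    by_cases hi : i < N
    · obtain ⟨C, hC⟩ := (hPiece i hi).2
      refine ⟨C, ?_, fun _ => hC⟩
      by_contra hC0
      push_neg at hC0
      have h1 := hC (P i) ⟨le_rfl, hPle i hi⟩ (P (i + 1)) ⟨hPle i hi, le_rfl⟩
      have h2 : (0:ℝ) < |P i - P (i + 1)| := abs_pos.2 (sub_ne_zero.2 (ne_of_lt (hPlt i hi)))
      nlinarith [hnonneg (g (P i)) (g (P (i + 1)))]
    · exact ⟨0, le_rfl, fun h => absurd h hi⟩
  choose Cs hCs0 hCs using hCex
  set Ctot := ∑ i ∈ Finset.range N, Cs i with hCtotdef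
  have hCtot0 : 0 ≤ Ctot := Finset.sum_nonneg fun i _ => hCs0 i
  -- clamped coordinates
  set m : ℕ → ℝ → ℝ := fun i s => max (min s (P (i + 1))) (P i) with hm
  have hmmem : ∀ i, i < N → ∀ s : ℝ, m i s ∈ Set.Icc (P i) (P (i + 1)) := by
    intro i hi s
    exact ⟨le_max_right _ _, max_le (min_le_right _ _) (hPle i hi)⟩
  have hmmono : ∀ i, Monotone (m i) := by
    intro i a b hab
    exact max_le_max (min_le_min hab le_rfl) le_rfl
  have hmlip : ∀ i (a b : ℝ), |m i a - m i b| ≤ |a - b| := by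
    intro i a b
    have h2 := abs_min_sub_min_le_max a (P (i + 1)) b (P (i + 1))
    simp only [sub_self, abs_zero] at h2
    rw [max_eq_left (abs_nonneg _)] at h2
    exact le_trans (abs_max_sub_max_le_abs _ _ _) h2
  have hm0 : ∀ i, i < N → m i 0 = P i := by
    intro i hi
    have h1 : (0:ℝ) ≤ P i := by rw [← hP0]; exact hPmono 0 i (Nat.zero_le i) (by omega)
    simp only [hm]
    exact max_eq_right (le_trans (min_le_left _ _) h1)
  have hm1 : ∀ i, i < N → m i 1 = P (i + 1) := by
    intro i hi
    have h1 : P (i + 1) ≤ 1 := by rw [← hPN]; exact hPmono (i + 1) N (by omega) le_rfl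
    simp only [hm]
    rw [min_eq_right h1]
    exact max_eq_left (hPle i hi)
  set Lam : ℝ → ℝ → ℝ≥0∞ := fun a b => ∑ i ∈ Finset.range N, pieceLen J g (m i a) (m i b)
    with hLamdef
  have hLam_self : ∀ a : ℝ, Lam a a = 0 := by
    intro a; simp only [hLamdef]
    exact Finset.sum_eq_zero fun i _ => QM15.pieceLen_self h0 g (m i a)
  have hLam_add : ∀ a b c : ℝ, a ≤ b → b ≤ c → Lam a b + Lam b c = Lam a c := by
    intro a b c hab hbc
    simp only [hLamdef]
    rw [← Finset.sum_add_distrib]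
    refine Finset.sum_congr rfl fun i hi => ?_
    rw [Finset.mem_range] at hi
    have hIccsub : Set.Icc (m i a) (m i c) ⊆ Set.Icc (P i) (P (i + 1)) :=
      Set.Icc_subset_Icc (hmmem i hi a).1 (hmmem i hi c).2
    refine le_antisymm (QM15.pieceLen_superadd (hmmono i hab) (hmmono i hbc)) ?_
    refine QM15.pieceLen_subadd h0 ?_ (hmmono i hab) (hmmono i hbc)
    intro s hs t ht r hr
    exact (hPiece i hi).1 s (hIccsub hs) t (hIccsub ht) r (hIccsub hr)
  have hLam01 : Lam 0 1 = DJ J x y := by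
    rw [← hlen]
    simp only [hLamdef, pmlLength]
    refine Finset.sum_congr rfl fun i hi => ?_
    rw [Finset.mem_range] at hi
    rw [hm0 i hi, hm1 i hi]
  have hLam_le_L : ∀ a b : ℝ, 0 ≤ a → a ≤ b → b ≤ 1 → Lam a b ≤ DJ J x y := by
    intro a b h1 h2 h3
    rw [← hLam01, ← hLam_add 0 b 1 (by linarith) h3, ← hLam_add 0 a b h1 h2]
    exact le_trans le_add_self le_self_add
  have hLam_fin : ∀ a b : ℝ, 0 ≤ a → a ≤ b → b ≤ 1 → Lam a b ≠ ⊤ :=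
    fun a b h1 h2 h3 => ne_top_of_le_ne_top hLfin (hLam_le_L a b h1 h2 h3)
  have hLam_lip : ∀ a b : ℝ, a ≤ b → Lam a b ≤ ENNReal.ofReal (Ctot * (b - a)) := by
    intro a b hab
    simp only [hLamdef]
    calc ∑ i ∈ Finset.range N, pieceLen J g (m i a) (m i b)
        ≤ ∑ i ∈ Finset.range N, ENNReal.ofReal (Cs i * (b - a)) := by
          refine Finset.sum_le_sum fun i hi => ?_
          rw [Finset.mem_range] at hi
          have hsub : Set.Icc (m i a) (m i b) ⊆ Set.Icc (P i) (P (i + 1)) :=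
            Set.Icc_subset_Icc (hmmem i hi a).1 (hmmem i hi b).2
          refine le_trans (QM15.pieceLen_le_of_lip
            (fun s hs t ht => hCs i hi s (hsub hs) t (hsub ht)) (hCs0 i)) ?_
          refine ENNReal.ofReal_le_ofReal (mul_le_mul_of_nonneg_left ?_ (hCs0 i))
          have h1 := hmlip i b a
          rw [abs_of_nonneg (sub_nonneg.2 (hmmono i hab)),
            abs_of_nonneg (sub_nonneg.2 hab)] at h1
          exact h1
    _ = ENNReal.ofReal (Ctot * (b - a)) := by
          rw [← ENNReal.ofReal_sum_of_nonneg
            (fun i _ => mul_nonneg (hCs0 i) (by linarith))]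
          rw [← Finset.sum_mul]
  -- the key upper bound: DJ between points of the curve is at most Lam
  have hDJle : ∀ a b : ℝ, 0 ≤ a → a ≤ b → b ≤ 1 → DJ J (g a) (g b) ≤ Lam a b := by
    intro a b ha0 hab hb1
    set cl : ℝ → ℝ := fun s => max (min s b) a with hcl
    set h : ℝ → X := fun u => g (cl u) with hhdef
    have hclmono : Monotone cl := fun s t hst => max_le_max (min_le_min hst le_rfl) le_rfl
    have hcl0 : cl 0 = a := by
      simp only [hcl]
      rw [min_eq_left (by linarith : (0:ℝ) ≤ b)]
      exact max_eq_right ha0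
    have hcl1 : cl 1 = b := by
      simp only [hcl]
      rw [min_eq_right hb1]
      exact max_eq_left hab
    have hcllip : ∀ s t : ℝ, |cl s - cl t| ≤ |s - t| := by
      intro s t
      have h2 := abs_min_sub_min_le_max s b t b
      simp only [sub_self, abs_zero] at h2
      rw [max_eq_left (abs_nonneg _)] at h2
      exact le_trans (abs_max_sub_max_le_abs _ _ _) h2
    have hcase : ∀ i, i < N →
        (pieceLen J h (P i) (P (i + 1)) ≤ pieceLen J g (m i a) (m i b)) ∧
        IsPiece J h (P i) (P (i + 1)) := by
      intro i hi
      by_cases hA : a ≤ P (i + 1)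
      · by_cases hB : P i ≤ b
        · -- overlapping case
          have hclmem : ∀ s ∈ Set.Icc (P i) (P (i + 1)), cl s ∈ Set.Icc (P i) (P (i + 1)) := by
            intro s hs
            constructor
            · exact le_trans (le_min hs.1 hB) (le_max_left _ _)
            · exact max_le (le_trans (min_le_left _ _) hs.2) hA
          constructor
          · have he1 : cl (P i) = m i a := by
              simp only [hcl, hm]
              rw [min_eq_left hB, min_eq_left hA, max_comm]
            have he2 : cl (P (i + 1)) = m i b := by
              simp only [hcl, hm]
              rw [max_eq_left (le_min hA hab), max_eq_left (le_min hB (hPle i hi)),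
                min_comm]
            exact QM15.pieceLen_le_map cl (hclmono.monotoneOn _) (hPle i hi) he1 he2
              (fun s _ => rfl)
          · constructor
            · intro s hs t ht r hr
              exact (hPiece i hi).1 _ (hclmem s hs) _ (hclmem t ht) _ (hclmem r hr)
            · refine ⟨Cs i, fun s hs t ht => ?_⟩
              calc J (h s) (h t) ≤ Cs i * |cl s - cl t| :=
                hCs i hi _ (hclmem s hs) _ (hclmem t ht)
              _ ≤ Cs i * |s - t| := mul_le_mul_of_nonneg_left (hcllip s t) (hCs0 i)
        · -- b < P i : curve constant at g b on this piece
          have hbP : b < P i := not_le.1 hB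
          have hclconst : ∀ s ∈ Set.Icc (P i) (P (i + 1)), cl s = b := by
            intro s hs
            simp only [hcl]
            rw [min_eq_right (le_trans (le_of_lt hbP) hs.1)]
            exact max_eq_left hab
          constructor
          · refine le_trans (QM15.pieceLen_le_map cl (hclmono.monotoneOn _) (hPle i hi)
              (hclconst _ ⟨le_rfl, hPle i hi⟩) (hclconst _ ⟨hPle i hi, le_rfl⟩)
              (fun s _ => rfl)) ?_
            rw [QM15.pieceLen_self h0]
            exact zero_le
          · constructor
            · intro s hs t ht r hr
              show J (g (cl s)) (g (cl r)) ≤ J (g (cl s)) (g (cl t)) + J (g (cl t)) (g (cl r))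
              rw [hclconst s hs, hclconst t ht, hclconst r hr, h0]
              norm_num
            · refine ⟨0, fun s hs t ht => ?_⟩
              show J (g (cl s)) (g (cl t)) ≤ 0 * |s - t|
              rw [hclconst s hs, hclconst t ht, h0]
              simp
      · -- P (i+1) < a : curve constant at g a on this piece
        have hPa : P (i + 1) < a := not_le.1 hA
        have hclconst : ∀ s ∈ Set.Icc (P i) (P (i + 1)), cl s = a := by
          intro s hs
          simp only [hcl]
          exact max_eq_right (le_trans (min_le_left _ _) (by linarith [hs.2]))
        constructor
        · refine le_trans (QM15.pieceLen_le_map cl (hclmono.monotoneOn _) (hPle i hi)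
            (hclconst _ ⟨le_rfl, hPle i hi⟩) (hclconst _ ⟨hPle i hi, le_rfl⟩)
            (fun s _ => rfl)) ?_
          rw [QM15.pieceLen_self h0]
          exact zero_le
        · constructor
          · intro s hs t ht r hr
            show J (g (cl s)) (g (cl r)) ≤ J (g (cl s)) (g (cl t)) + J (g (cl t)) (g (cl r))
            rw [hclconst s hs, hclconst t ht, hclconst r hr, h0]
            norm_num
          · refine ⟨0, fun s hs t ht => ?_⟩
            show J (g (cl s)) (g (cl t)) ≤ 0 * |s - t|
            rw [hclconst s hs, hclconst t ht, h0]
            simp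
    have hPMLh : IsPML J N 0 1 h P := ⟨hP0, hPN, hPlt, fun i hi => (hcase i hi).2⟩
    have hh0 : h 0 = g a := by show g (cl 0) = g a; rw [hcl0]
    have hh1 : h 1 = g b := by show g (cl 1) = g b; rw [hcl1]
    refine le_trans QM15.DJ_le_DJN (le_trans (QM15.DJN_le ⟨hPMLh, hh0, hh1⟩) ?_)
    simp only [hLamdef, pmlLength]
    exact Finset.sum_le_sum fun i hi => (hcase i (Finset.mem_range.1 hi)).1
  -- arclength function
  set ell : ℝ → ℝ := fun s => (Lam 0 s).toReal with helldef
  have hell0 : ell 0 = 0 := by simp only [helldef]; rw [hLam_self]; simp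
  have hell1 : ell 1 = Lr := by simp only [helldef]; rw [hLam01]
  have helldiff : ∀ a b : ℝ, 0 ≤ a → a ≤ b → b ≤ 1 → ell b - ell a = (Lam a b).toReal := by
    intro a b h1 h2 h3
    have hadd := hLam_add 0 a b h1 h2
    have hfin1 : Lam 0 a ≠ ⊤ := hLam_fin 0 a le_rfl h1 (by linarith)
    have hfin2 : Lam a b ≠ ⊤ := hLam_fin a b h1 h2 h3
    simp only [helldef]
    rw [← hadd, ENNReal.toReal_add hfin1 hfin2]
    ring
  have hellmono : ∀ a b : ℝ, 0 ≤ a → a ≤ b → b ≤ 1 → ell a ≤ ell b := by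
    intro a b h1 h2 h3
    have hd := helldiff a b h1 h2 h3
    have hn := ENNReal.toReal_nonneg (a := Lam a b)
    linarith
  have hellcont : ContinuousOn ell (Set.Icc 0 1) := by
    have hkey : ∀ p q : ℝ, p ∈ Set.Icc (0:ℝ) 1 → q ∈ Set.Icc (0:ℝ) 1 → p ≤ q →
        dist (ell p) (ell q) ≤ Ctot * dist p q := by
      intro p q hp hq hpq
      have hd := helldiff p q hp.1 hpq hq.2
      have hmn := hellmono p q hp.1 hpq hq.2
      rw [Real.dist_eq, Real.dist_eq, abs_sub_comm,
        abs_of_nonneg (by linarith : (0:ℝ) ≤ ell q - ell p),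
        abs_sub_comm, abs_of_nonneg (by linarith : (0:ℝ) ≤ q - p)]
      have h1 := hLam_lip p q hpq
      have h2 := ENNReal.toReal_mono ENNReal.ofReal_ne_top h1
      rw [ENNReal.toReal_ofReal (mul_nonneg hCtot0 (by linarith))] at h2
      linarith
    refine LipschitzOnWith.continuousOn (LipschitzOnWith.of_dist_le' (K := Ctot) ?_)
    intro p hp q hq
    rcases le_total p q with hle | hle
    · exact hkey p q hp hq hle
    · rw [dist_comm, dist_comm p q]
      exact hkey q p hq hp hle
  have hLr0 : 0 ≤ Lr := ENNReal.toReal_nonneg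
  have hsurj : ∀ t : ℝ, t ∈ Set.Icc 0 Lr → ∃ s ∈ Set.Icc (0:ℝ) 1, ell s = t := by
    intro t ht
    have him := intermediate_value_Icc (zero_le_one) hellcont
    rw [hell0, hell1] at him
    obtain ⟨s, hs, hes⟩ := him ht
    exact ⟨s, hs, hes⟩
  have hex : ∀ t : ℝ, ∃ s : ℝ, s ∈ Set.Icc (0:ℝ) 1 ∧ (t ∈ Set.Icc 0 Lr → ell s = t) := by
    intro t
    by_cases ht : t ∈ Set.Icc 0 Lr
    · obtain ⟨s, hs, hes⟩ := hsurj t ht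
      exact ⟨s, hs, fun _ => hes⟩
    · exact ⟨0, ⟨le_rfl, zero_le_one⟩, fun h => absurd h ht⟩
  choose sc0 hsc0mem hsc0val using hex
  set sc : ℝ → ℝ := fun t => if t = Lr then 1 else if t = 0 then 0 else sc0 t with hscdef
  set F : ℝ → X := fun t => g (sc t) with hFdef
  have hscmem : ∀ t : ℝ, sc t ∈ Set.Icc (0:ℝ) 1 := by
    intro t
    simp only [hscdef]
    by_cases h1 : t = Lr
    · rw [if_pos h1]; exact ⟨zero_le_one, le_rfl⟩
    by_cases h2 : t = 0
    · rw [if_neg h1, if_pos h2]; exact ⟨le_rfl, zero_le_one⟩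
    · rw [if_neg h1, if_neg h2]; exact hsc0mem t
  have hscval : ∀ t ∈ Set.Icc 0 Lr, ell (sc t) = t := by
    intro t ht
    simp only [hscdef]
    by_cases h1 : t = Lr
    · rw [if_pos h1, hell1, h1]
    by_cases h2 : t = 0
    · rw [if_neg h1, if_pos h2, hell0, h2]
    · rw [if_neg h1, if_neg h2]; exact hsc0val t ht
  have hFLr : F Lr = y := by
    show g (sc Lr) = y
    have : sc Lr = 1 := by simp [hscdef]
    rw [this, hg1]
  have hF0 : F 0 = x := by
    show g (sc 0) = x
    by_cases h1 : (0:ℝ) = Lr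
    · have hsc01 : sc 0 = 1 := by simp only [hscdef]; rw [if_pos h1]
      have hDJ0 : DJ J x y = 0 := by
        have hLr00 : Lr = 0 := h1.symm
        rcases (ENNReal.toReal_eq_zero_iff _).1 hLr00 with h | h
        · exact h
        · exact absurd h hLfin
      have hxy : x = y := QM15.eq_of_DJ_eq_zero hnonneg hiff hσ htri hDJN hDJ0
      rw [hsc01, hg1, ← hxy]
    · have hsc00 : sc 0 = 0 := by
        simp [hscdef, h1]
      rw [hsc00, hg0]
  have hmain : ∀ t s : ℝ, t ∈ Set.Icc 0 Lr → s ∈ Set.Icc 0 Lr → t ≤ s →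
      DJ J (F t) (F s) = ENNReal.ofReal (s - t) := by
    intro t s ht hs hts
    have hamem := hscmem t
    have hbmem := hscmem s
    have hla : ell (sc t) = t := hscval t ht
    have hlb : ell (sc s) = s := hscval s hs
    have hub : DJ J (F t) (F s) ≤ ENNReal.ofReal (s - t) := by
      rcases le_total (sc t) (sc s) with hab | hba
      · have h1 : DJ J (g (sc t)) (g (sc s)) ≤ Lam (sc t) (sc s) :=
          hDJle _ _ hamem.1 hab hbmem.2
        have h2 : (Lam (sc t) (sc s)).toReal = s - t := by
          rw [← helldiff _ _ hamem.1 hab hbmem.2, hla, hlb]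
        have h3 : Lam (sc t) (sc s) = ENNReal.ofReal (s - t) := by
          rw [← h2, ENNReal.ofReal_toReal (hLam_fin _ _ hamem.1 hab hbmem.2)]
        exact h3 ▸ h1
      · have hst : s ≤ t := by
          have hmn := hellmono _ _ hbmem.1 hba hamem.2
          rw [hla, hlb] at hmn; exact hmn
        have hts' : t = s := le_antisymm hts hst
        have hFeq : F t = F s := by rw [hts']
        calc DJ J (F t) (F s) = DJ J (F s) (F s) := by rw [hFeq]
        _ = 0 := QM15.DJ_self h0 _
        _ ≤ _ := zero_le
    have h1 : DJ J x (F t) ≤ ENNReal.ofReal t := by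
      have h2 : DJ J (g 0) (g (sc t)) ≤ Lam 0 (sc t) :=
        hDJle 0 _ le_rfl hamem.1 hamem.2
      have h4 : (Lam 0 (sc t)).toReal = t := by
        have hd := helldiff 0 _ le_rfl hamem.1 hamem.2
        rw [hell0, hla] at hd; linarith
      have h3 : Lam 0 (sc t) = ENNReal.ofReal t := by
        conv_rhs => rw [← h4]
        rw [ENNReal.ofReal_toReal (hLam_fin 0 _ le_rfl hamem.1 hamem.2)]
      rw [← hg0]
      show DJ J (g 0) (g (sc t)) ≤ ENNReal.ofReal t
      rw [← h3]; exact h2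
    have h5 : DJ J (F s) y ≤ ENNReal.ofReal (Lr - s) := by
      have h2 : DJ J (g (sc s)) (g 1) ≤ Lam (sc s) 1 :=
        hDJle _ 1 hbmem.1 hbmem.2 le_rfl
      have h4 : (Lam (sc s) 1).toReal = Lr - s := by
        have hd := helldiff _ 1 hbmem.1 hbmem.2 le_rfl
        rw [hell1, hlb] at hd; linarith
      have h3 : Lam (sc s) 1 = ENNReal.ofReal (Lr - s) := by
        rw [← h4, ENNReal.ofReal_toReal (hLam_fin _ 1 hbmem.1 hbmem.2 le_rfl)]
      rw [← hg1]
      show DJ J (g (sc s)) (g 1) ≤ ENNReal.ofReal (Lr - s)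
      rw [← h3]; exact h2
    have htotal : DJ J x y ≤
        ENNReal.ofReal t + (DJ J (F t) (F s) + ENNReal.ofReal (Lr - s)) := by
      calc DJ J x y ≤ DJ J x (F t) + DJ J (F t) y := QM15.DJ_triangle x (F t) y
      _ ≤ DJ J x (F t) + (DJ J (F t) (F s) + DJ J (F s) y) :=
        add_le_add le_rfl (QM15.DJ_triangle (F t) (F s) y)
      _ ≤ ENNReal.ofReal t + (DJ J (F t) (F s) + ENNReal.ofReal (Lr - s)) :=
        add_le_add h1 (add_le_add le_rfl h5)
    have hDfin : DJ J (F t) (F s) ≠ ⊤ := ne_top_of_le_ne_top ENNReal.ofReal_ne_top hub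
    have hfin2 : (ENNReal.ofReal (Lr - s)) ≠ ⊤ := ENNReal.ofReal_ne_top
    have hfin3 : DJ J (F t) (F s) + ENNReal.ofReal (Lr - s) ≠ ⊤ := by
      simp [ENNReal.add_ne_top, hDfin, hfin2]
    have hfin4 : ENNReal.ofReal t + (DJ J (F t) (F s) + ENNReal.ofReal (Lr - s)) ≠ ⊤ := by
      simp [ENNReal.add_ne_top, ENNReal.ofReal_ne_top, hfin3, hDfin, hfin2]
    have h6 := ENNReal.toReal_mono hfin4 htotal
    rw [ENNReal.toReal_add ENNReal.ofReal_ne_top hfin3, ENNReal.toReal_add hDfin hfin2,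
      ENNReal.toReal_ofReal ht.1,
      ENNReal.toReal_ofReal (by linarith [hs.2] : (0:ℝ) ≤ Lr - s)] at h6
    have hlow : ENNReal.ofReal (s - t) ≤ DJ J (F t) (F s) := by
      refine ENNReal.ofReal_le_of_le_toReal ?_
      have : (DJ J x y).toReal = Lr := rfl
      linarith
    exact le_antisymm hub hlow
  refine ⟨F, hF0, hFLr, ?_⟩
  intro t ht s hs
  rcases le_total t s with hle | hle
  · rw [hmain t s ht hs hle, abs_sub_comm, abs_of_nonneg (by linarith : (0:ℝ) ≤ s - t)]
  · rw [QM15.DJ_symm hsymm (F t) (F s), hmain s t hs ht hle,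
      abs_of_nonneg (by linarith : (0:ℝ) ≤ t - s)]
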